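/- Under the assumptions ρ_p ∈ (0,1) for all 1 ≤ p ≤ P, β_p > 0, and saturation Σ_p β_p E[G_p] > 1 where G_p is truncated geometric with parameter ρ_p on {0,...,C_p}, let δ(C) ∈ (0,1) be the unique solution of Σ_p β_p E[G_p(ρ_p y)] = 1 (with G_p(z) truncated geometric with parameter z on {0,...,C_p}) and δ_0 ∈ (0,1) the unique solution of Σ_p β_p ρ_p y/(1 - ρ_p y) = 1. Then δ_0 ≤ δ(C) and |δ(C) - δ_0| ≤ (1/Σ_p β_p ρ_p) · Σ_p β_p (C_p+1) ρ_p^{C_p+1} / (1 - ρ_p^{C_p}). -/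

import Mathlib

open Finset

lemma key_id (z : ℝ) (n : ℕ) :
    z * (∑ k ∈ range (n+1), z^k) - (1-z) * (∑ k ∈ range (n+1), (k:ℝ)*z^k)
    = ((n:ℝ)+1) * z^(n+1) := by
  induction n with
  | zero => simp
  | succ n ih =>
    rw [sum_range_succ (f := fun k => z^k), sum_range_succ (f := fun k => (k:ℝ)*z^k)]
    push_cast
    push_cast at ih
    linear_combination ih

lemma E_eq (z : ℝ) (hz0 : 0 < z) (hz1 : z < 1) (n : ℕ) :
    (∑ k ∈ range (n+1), (k:ℝ)*z^k) / (∑ k ∈ range (n+1), z^k)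
    = z/(1-z) - ((n:ℝ)+1)*z^(n+1)/(1-z^(n+1)) := by
  set A := ∑ k ∈ range (n+1), (k:ℝ)*z^k with hA
  set B := ∑ k ∈ range (n+1), z^k with hB'
  have hB : (0:ℝ) < B := sum_pos (fun i _ => pow_pos hz0 i) ⟨0, by simp⟩
  have hgeom : (1-z) * B = 1 - z^(n+1) := by
    have h := geom_sum_mul z (n+1)
    linarith
  have h1z : (0:ℝ) < 1 - z := by linarith
  have hzn : (0:ℝ) < 1 - z^(n+1) := by rw [← hgeom]; positivity
  have hk := key_id z n
  rw [← hA, ← hB'] at hk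
  have h1 : A / B = (z*B - ((n:ℝ)+1)*z^(n+1)) / ((1-z)*B) := by
    rw [div_eq_div_iff hB.ne' (by positivity)]
    linear_combination (-B) * hk
  rw [h1, hgeom, sub_div]
  congr 1
  rw [← hgeom, mul_comm (1-z) B, mul_comm z B, mul_div_mul_left _ _ hB.ne']

/-- Underloaded case: the solution δ(C) of the exact fixed point equation and
the solution δ_0 of the simplified equation satisfy δ_0 ≤ δ(C) and
|δ(C) - δ_0| ≤ (1/Σ β_p ρ_p) Σ β_p (C_p+1) ρ_p^{C_p+1}/(1-ρ_p^{C_p}). -/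
theorem underloaded_approximation (P : ℕ) (hP : 1 ≤ P)
    (β ρ : Fin P → ℝ) (C : Fin P → ℕ)
    (hβ : ∀ p, 0 < β p) (hρ : ∀ p, ρ p ∈ Set.Ioo (0 : ℝ) 1) (hC : ∀ p, 1 ≤ C p)
    (E : Fin P → ℝ → ℝ)
    (hE : ∀ p z, E p z = (∑ k ∈ Finset.range (C p + 1), (k : ℝ) * z ^ k) /
        (∑ k ∈ Finset.range (C p + 1), z ^ k))
    (hsat : 1 < ∑ p, β p * E p (ρ p))
    (δC δ0 : ℝ)
    (hδC : δC ∈ Set.Ioo (0 : ℝ) 1) (hδCeq : ∑ p, β p * E p (ρ p * δC) = 1)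
    (hδ0 : δ0 ∈ Set.Ioo (0 : ℝ) 1) (hδ0eq : ∑ p, β p * ρ p * δ0 / (1 - ρ p * δ0) = 1) :
    δ0 ≤ δC ∧ |δC - δ0| ≤ (1 / ∑ p, β p * ρ p) *
      ∑ p, β p * ((C p : ℝ) + 1) * ρ p ^ (C p + 1) / (1 - ρ p ^ (C p)) := by
  have hne : Nonempty (Fin P) := ⟨⟨0, hP⟩⟩
  obtain ⟨hδC0, hδC1⟩ := hδC
  obtain ⟨hδ00, hδ01⟩ := hδ0
  -- abbreviations
  set a : Fin P → ℝ := fun p => ρ p * δC with ha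
  set b : Fin P → ℝ := fun p => ρ p * δ0 with hb
  have ha0 : ∀ p, 0 < a p := fun p => mul_pos (hρ p).1 hδC0
  have ha1 : ∀ p, a p < 1 := fun p => by
    have h1 := (hρ p).2; have h2 := (hρ p).1
    show ρ p * δC < 1; nlinarith
  have hb0 : ∀ p, 0 < b p := fun p => mul_pos (hρ p).1 hδ00
  have hb1 : ∀ p, b p < 1 := fun p => by
    have h1 := (hρ p).2; have h2 := (hρ p).1
    show ρ p * δ0 < 1; nlinarith
  set d : Fin P → ℝ := fun p =>
    ((C p : ℝ)+1) * (a p)^(C p + 1) / (1 - (a p)^(C p + 1)) with hd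
  have hEa : ∀ p, E p (a p) = a p/(1 - a p) - d p := fun p => by
    rw [hE p (a p), E_eq (a p) (ha0 p) (ha1 p) (C p)]
  have hdnn : ∀ p, 0 ≤ d p := fun p => by
    have h1 : (0:ℝ) < 1 - (a p)^(C p + 1) := by
      have h : (a p)^(C p + 1) < 1 := pow_lt_one₀ (le_of_lt (ha0 p)) (ha1 p) (by omega)
      linarith
    have h2 : (0:ℝ) < (a p)^(C p + 1) := pow_pos (ha0 p) _
    positivity
  -- sum identity : ∑ β (a/(1-a)) = 1 + ∑ β d
  have hsum : ∑ p, β p * (a p / (1 - a p)) = 1 + ∑ p, β p * d p := by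
    have h := hδCeq
    rw [Finset.sum_congr rfl (fun p _ => by
      rw [show ρ p * δC = a p from rfl, hEa p] :
      ∀ p ∈ Finset.univ, β p * E p (ρ p * δC)
        = β p * (a p / (1 - a p) - d p))] at h
    have h2 : ∑ p, β p * (a p / (1 - a p) - d p)
        = ∑ p, β p * (a p / (1 - a p)) - ∑ p, β p * d p := by
      rw [← Finset.sum_sub_distrib]
      exact Finset.sum_congr rfl fun p _ => by ring
    rw [h2] at h
    linarith
  have hsum0 : ∑ p, β p * (b p / (1 - b p)) = 1 := by
    have h := hδ0eq
    rw [Finset.sum_congr rfl (fun p _ => by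
      rw [show ρ p * δ0 = b p from rfl]; ring :
      ∀ p ∈ Finset.univ, β p * ρ p * δ0 / (1 - ρ p * δ0)
        = β p * (b p / (1 - b p)))] at h
    exact h
  have hsumd : 0 ≤ ∑ p, β p * d p :=
    Finset.sum_nonneg fun p _ => mul_nonneg (hβ p).le (hdnn p)
  -- Part 1
  have h01 : δ0 ≤ δC := by
    by_contra hcon
    push_neg at hcon
    have hlt : ∑ p, β p * (a p / (1 - a p)) < ∑ p, β p * (b p / (1 - b p)) := by
      refine Finset.sum_lt_sum_of_nonempty Finset.univ_nonempty fun p _ => ?_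
      refine mul_lt_mul_of_pos_left ?_ (hβ p)
      rw [div_lt_div_iff₀ (by linarith [ha1 p]) (by linarith [hb1 p])]
      have hab : a p < b p := by
        have := (hρ p).1; rw [ha, hb]; simp only; nlinarith
      nlinarith [ha0 p, hb0 p, ha1 p, hb1 p]
    rw [hsum, hsum0] at hlt
    linarith
  refine ⟨h01, ?_⟩
  rw [abs_of_nonneg (by linarith)]
  -- positivity of S = ∑ β ρ
  have hS : (0:ℝ) < ∑ p, β p * ρ p :=
    Finset.sum_pos (fun p _ => mul_pos (hβ p) (hρ p).1) Finset.univ_nonempty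
  -- step A : S * (δC - δ0) ≤ ∑ β d
  have hstepA : (∑ p, β p * ρ p) * (δC - δ0) ≤ ∑ p, β p * d p := by
    have h1 : (∑ p, β p * ρ p) * (δC - δ0)
        ≤ ∑ p, (β p * (a p / (1 - a p)) - β p * (b p / (1 - b p))) := by
      rw [Finset.sum_mul]
      refine Finset.sum_le_sum fun p _ => ?_
      have h1a : (0:ℝ) < 1 - a p := by linarith [ha1 p]
      have h1b : (0:ℝ) < 1 - b p := by linarith [hb1 p]
      have hdiff : a p / (1 - a p) - b p / (1 - b p)
          = (a p - b p) / ((1 - a p) * (1 - b p)) := by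
        field_simp; ring
      have hab : b p ≤ a p := by
        have := (hρ p).1.le; rw [ha, hb]; simp only
        exact mul_le_mul_of_nonneg_left h01 this
      have hge : a p - b p ≤ (a p - b p) / ((1 - a p) * (1 - b p)) := by
        rw [le_div_iff₀ (by positivity)]
        have h3 : (1 - a p) * (1 - b p) ≤ 1 := by nlinarith [ha0 p, hb0 p, ha1 p, hb1 p]
        have h4 := mul_le_mul_of_nonneg_left h3 (sub_nonneg.2 hab)
        linarith
      have : ρ p * (δC - δ0) ≤ a p / (1 - a p) - b p / (1 - b p) := by
        rw [hdiff]
        have : ρ p * (δC - δ0) = a p - b p := by rw [ha, hb]; ring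
        linarith
      calc β p * ρ p * (δC - δ0) = β p * (ρ p * (δC - δ0)) := by ring
        _ ≤ β p * (a p / (1 - a p) - b p / (1 - b p)) :=
            mul_le_mul_of_nonneg_left this (hβ p).le
        _ = β p * (a p / (1 - a p)) - β p * (b p / (1 - b p)) := by ring
    rw [Finset.sum_sub_distrib, hsum, hsum0] at h1
    linarith
  -- step B : ∑ β d ≤ D
  have hstepB : ∑ p, β p * d p
      ≤ ∑ p, β p * ((C p : ℝ) + 1) * ρ p ^ (C p + 1) / (1 - ρ p ^ (C p)) := by
    refine Finset.sum_le_sum fun p _ => ?_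
    have hρ0 := (hρ p).1
    have hρ1 := (hρ p).2
    have haρ : a p ≤ ρ p := by
      rw [ha]; simp only
      nlinarith
    have hpow1 : (a p)^(C p + 1) ≤ (ρ p)^(C p + 1) :=
      pow_le_pow_left₀ (ha0 p).le haρ _
    have hpow2 : (ρ p)^(C p + 1) ≤ (ρ p)^(C p) :=
      pow_le_pow_of_le_one hρ0.le hρ1.le (Nat.le_succ _)
    have hden : (0:ℝ) < 1 - (ρ p)^(C p) := by
      have hCp := hC p
      have := pow_lt_one₀ hρ0.le hρ1 (by omega : C p ≠ 0)
      linarith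
    have hden2 : 1 - (ρ p)^(C p) ≤ 1 - (a p)^(C p + 1) := by linarith
    have hfrac : d p ≤ ((C p : ℝ)+1) * (ρ p)^(C p + 1) / (1 - (ρ p)^(C p)) := by
      rw [hd]; simp only
      refine div_le_div₀ (by positivity) ?_ hden hden2
      have : ((C p : ℝ)+1) ≥ 0 := by positivity
      nlinarith
    calc β p * d p ≤ β p * (((C p : ℝ)+1) * (ρ p)^(C p + 1) / (1 - (ρ p)^(C p))) :=
          mul_le_mul_of_nonneg_left hfrac (hβ p).le
      _ = β p * ((C p : ℝ) + 1) * ρ p ^ (C p + 1) / (1 - ρ p ^ (C p)) := by ring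
  rw [one_div, ← div_eq_inv_mul, le_div_iff₀ hS]
  calc (δC - δ0) * (∑ p, β p * ρ p) = (∑ p, β p * ρ p) * (δC - δ0) := by ring
    _ ≤ ∑ p, β p * d p := hstepA
    _ ≤ _ := hstepB
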